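/- Let Π = (G = (V, E), Σ, {C_e}) be a 2-CSP instance and let ψ_s and ψ_t be satisfying assignments of Π. Then there exists a satisfying reconfiguration multi-assignment sequence starting at the multi-assignment v ↦ {ψ_s(v)} and ending at v ↦ {ψ_t(v)} in which every multi-assignment has size at most 2·|V|. -/

import Mathlib

open Finset
open scoped Classical

/-- Let `Π` be a 2-CSP with constraint graph `G`, alphabet `α` and (symmetric)
constraints `C`, and let `ψs, ψt` be satisfying assignments. Then there is a satisfying
reconfiguration multi-assignment sequence from `v ↦ {ψs v}` to `v ↦ {ψt v}` (consecutive
multi-assignments differing by exactly one label, every multi-assignment satisfying `Π`)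
in which every multi-assignment has size at most `2·|V|`. -/
theorem multiassignment_sequence_two_approx {V α : Type*} [Fintype V] [DecidableEq α]
    (G : SimpleGraph V)
    (C : V → V → α → α → Prop) (hC : ∀ u v a b, C u v a b ↔ C v u b a)
    (ψs ψt : V → α)
    (hψs : ∀ u v, G.Adj u v → C u v (ψs u) (ψs v))
    (hψt : ∀ u v, G.Adj u v → C u v (ψt u) (ψt v)) :
    ∃ (p : ℕ) (Φ : ℕ → V → Finset α),
      Φ 0 = (fun v => {ψs v}) ∧ Φ p = (fun v => {ψt v}) ∧
      (∀ i < p, ∑ v : V, (symmDiff (Φ i v) (Φ (i + 1) v)).card = 1) ∧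
      (∀ i ≤ p, ∀ u v, G.Adj u v → ∃ a ∈ Φ i u, ∃ b ∈ Φ i v, C u v a b) ∧
      (∀ i ≤ p, ∑ v : V, (Φ i v).card ≤ 2 * Fintype.card V) := by
  classical
  set l : List V := (Finset.univ.filter (fun v => ψs v ≠ ψt v)).toList with hl_def
  have hl : ∀ v, v ∈ l ↔ ψs v ≠ ψt v := by intro v; simp [hl_def]
  have hnd : l.Nodup := Finset.nodup_toList _
  set n := l.length with hn
  set Φ : ℕ → V → Finset α := fun i v =>
      (if v ∈ l.take (i - n) then (∅ : Finset α) else {ψs v}) ∪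
      (if v ∈ l.take i then {ψt v} else (∅ : Finset α)) with hΦ
  have hnotin : ∀ (j : ℕ) (hj : j < n), l[j]'(by omega) ∉ l.take j := by
    intro j hj h
    rw [List.mem_take_iff_getElem] at h
    obtain ⟨k, hk, hkeq⟩ := h
    have := (List.Nodup.getElem_inj_iff hnd).mp hkeq
    omega
  have htake : ∀ (j : ℕ) (hj : j < n) (v : V),
      v ∈ l.take (j + 1) ↔ v ∈ l.take j ∨ v = l[j]'(by omega) := by
    intro j hj v
    rw [List.take_succ, List.getElem?_eq_getElem hj, List.mem_append]
    simp [eq_comm]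
  refine ⟨2 * n, Φ, ?_, ?_, ?_, ?_, ?_⟩
  · funext v; simp [hΦ]
  · funext v
    have h1 : 2 * n - n = n := by omega
    have h2 : l.take (2 * n) = l := List.take_of_length_le (by omega)
    have h3 : l.take n = l := by rw [hn]; exact List.take_length
    simp only [hΦ, h1, h2, h3]
    by_cases hv : v ∈ l
    · simp [hv]
    · have : ψs v = ψt v := by by_contra h; exact hv ((hl v).2 h)
      simp [hv, this]
  · intro i hi
    by_cases hin : i < n
    · -- phase 1: add ψt l[i]
      have hj : i < n := hin
      set v₀ := l[i]'(by omega) with hv₀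
      have hv₀l : v₀ ∈ l := List.getElem_mem _
      have hne : ψs v₀ ≠ ψt v₀ := (hl v₀).1 hv₀l
      have h0 : i - n = 0 := by omega
      have h0' : i + 1 - n = 0 := by omega
      rw [Finset.sum_eq_single v₀]
      · have hm : v₀ ∈ l.take (i + 1) := (htake i hj v₀).2 (Or.inr rfl)
        have hnm : v₀ ∉ l.take i := hnotin i hj
        simp only [hΦ, h0, h0', List.take_zero, List.not_mem_nil, if_false, hm, hnm, if_true]
        have : symmDiff ({ψs v₀} ∪ (∅ : Finset α)) ({ψs v₀} ∪ {ψt v₀}) = {ψt v₀} := by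
          ext a; simp [symmDiff_def]; aesop
        rw [this, Finset.card_singleton]
      · intro b _ hb
        have : b ∈ l.take (i + 1) ↔ b ∈ l.take i := by
          rw [htake i hj b]; simp [hb]; intro h; exact absurd h hb
        simp only [hΦ, h0, h0', this]
        simp
      · intro h; exact absurd (Finset.mem_univ v₀) h
    · -- phase 2: remove ψs l[i-n]
      have hj : i - n < n := by omega
      set j := i - n with hjdef
      set v₀ := l[j]'(by omega) with hv₀
      have hv₀l : v₀ ∈ l := List.getElem_mem _
      have hne : ψs v₀ ≠ ψt v₀ := (hl v₀).1 hv₀l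
      have hsucc : i + 1 - n = j + 1 := by omega
      have hti : l.take i = l := List.take_of_length_le (by omega)
      have hti' : l.take (i + 1) = l := List.take_of_length_le (by omega)
      rw [Finset.sum_eq_single v₀]
      · have hm : v₀ ∈ l.take (j + 1) := (htake j hj v₀).2 (Or.inr rfl)
        have hnm : v₀ ∉ l.take j := hnotin j hj
        simp only [hΦ, hsucc, ← hjdef, hti, hti', hm, hnm, if_true, if_false, hv₀l]
        have : symmDiff (({ψs v₀} : Finset α) ∪ {ψt v₀}) ((∅ : Finset α) ∪ {ψt v₀})
            = {ψs v₀} := by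
          ext a; simp [symmDiff_def]; aesop
        rw [this, Finset.card_singleton]
      · intro b _ hb
        have : b ∈ l.take (j + 1) ↔ b ∈ l.take j := by
          rw [htake j hj b]; simp [hb]; intro h; exact absurd h hb
        simp only [hΦ, hsucc, ← hjdef, hti, hti', this]
        simp
      · intro h; exact absurd (Finset.mem_univ v₀) h
  · intro i hi u v huv
    by_cases hin : i ≤ n
    · have h0 : i - n = 0 := by omega
      exact ⟨ψs u, by simp [hΦ, h0], ψs v, by simp [hΦ, h0], hψs u v huv⟩
    · have hmem : ∀ w, ψt w ∈ Φ i w := by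
        intro w
        by_cases hw : w ∈ l
        · have : w ∈ l.take i := by
            rw [List.take_of_length_le (by omega)]; exact hw
          simp [hΦ, this]
        · have hw2 : ψs w = ψt w := by by_contra h; exact hw ((hl w).2 h)
          have hw3 : w ∉ l.take (i - n) := fun h => hw (List.mem_of_mem_take h)
          simp [hΦ, hw3, hw2]
      exact ⟨ψt u, hmem u, ψt v, hmem v, hψt u v huv⟩
  · intro i hi
    calc ∑ v : V, (Φ i v).card
        ≤ ∑ _v : V, 2 := by
          refine Finset.sum_le_sum fun v _ => ?_
          simp only [hΦ]
          refine le_trans (Finset.card_union_le _ _) ?_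
          split_ifs <;> simp
      _ = 2 * Fintype.card V := by simp [mul_comm]
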